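/- There exist ε > 0, C > 0 and a function β : [0, ε) → (0, σ_K/σ_S] such that for every Δt ∈ [0, ε), β(Δt) is the unique solution in (0, σ_K/σ_S] of the quartic equation 0 = (1−ρΔt)β⁴ − (2−ρΔt+βγΔt)(σ_K/σ_S)²β² + (σ_K/σ_S)⁴(1−βγΔt), and moreover |β(Δt) − (σ_K/σ_S − (γσ_K³/(2σ_S³))^{1/2}·√Δt)| ≤ C·Δt for all Δt ∈ [0, ε). -/

import Mathlib

noncomputable section

def quart (γ ρ T b : ℝ) : ℝ :=
  (1 - ρ * T) * b ^ 4 - (2 - ρ * T + b * γ * T) * b ^ 2 + (1 - b * γ * T)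

set_option maxHeartbeats 1000000 in
lemma alg_bound (γ ρ T s A c w : ℝ) (hγ : 0 < γ) (hρ : 0 < ρ)
    (hs : 0 < s) (hs2 : s^2 = T) (hA : 0 < A) (hA2 : A^2 = 2*γ)
    (hTγ : γ*T ≤ 1/2) (hTC : (5*γ+ρ)^2 * T ≤ 2*γ)
    (hc12 : 1/2 ≤ c) (hc1 : c ≤ 1) (hw_def : w = 1 - c^2)
    (key : w^2 = γ*T*(c*(c^2+1)) - ρ*T*(c^2*w)) :
    |c - (1 - A/2*s)| ≤ (γ + (5*γ+ρ)/2) * T := by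
  have hT0 : 0 ≤ T := by nlinarith [sq_nonneg s]
  have hγT : 0 ≤ γ * T := mul_nonneg hγ.le hT0
  have hρT : 0 ≤ ρ * T := mul_nonneg hρ.le hT0
  have hc0 : 0 < c := by linarith
  have hcw : c^2 = 1 - w := by rw [hw_def]; ring
  have hw0 : 0 ≤ w := by nlinarith
  have hw34 : w ≤ 3/4 := by nlinarith
  have hAs0 : 0 ≤ A * s := mul_nonneg hA.le hs.le
  have hAs1 : A * s ≤ 1 := by nlinarith [sq_nonneg (A*s - 1)]
  have hC1s : (5*γ+ρ) * s ≤ A := by nlinarith [sq_nonneg ((5*γ+ρ)*s - A), mul_pos hA hs]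
  have hρcw : 0 ≤ ρ*T*(c^2*w) := by positivity
  -- upper bound on w
  have hcc2 : c*(c^2+1) ≤ 2 := by nlinarith
  have h2 : w^2 ≤ 2*γ*T := by nlinarith [mul_le_mul_of_nonneg_left hcc2 hγT]
  have hwup : w ≤ A * s := by nlinarith
  -- lower bound on w
  have h1As : 0 ≤ 1 - A*s := by linarith
  have hclow : 1 - A*s ≤ c := by nlinarith [mul_nonneg hc0.le (by linarith : (0:ℝ) ≤ 1 - c)]
  have hx3 : (A*s)^3 ≤ A*s := by
    nlinarith [mul_nonneg hAs0 (sub_nonneg.2 hAs1), mul_nonneg (mul_nonneg hAs0 hAs0) (sub_nonneg.2 hAs1)]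
  have hcube : (1-A*s)^3 ≤ c^3 := pow_le_pow_left₀ h1As hclow 3
  have hcc : 2 - 5*(A*s) ≤ c*(c^2+1) := by nlinarith [hcube, hclow, hx3, sq_nonneg (A*s)]
  have h5 : c^2*w ≤ A*s := by
    nlinarith [hwup, mul_le_mul_of_nonneg_right (by nlinarith : c^2 ≤ 1) hw0]
  have hle : ρ*T*(c^2*w) ≤ ρ*T*(A*s) := mul_le_mul_of_nonneg_left h5 hρT
  have hstep1 : γ*T*(2-5*(A*s)) - ρ*T*(A*s) ≤ w^2 := by
    have h6 : γ*T*(2-5*(A*s)) ≤ γ*T*(c*(c^2+1)) := mul_le_mul_of_nonneg_left hcc hγT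
    linarith
  have hident : γ*T*(2-5*(A*s)) - ρ*T*(A*s) = A^2*s^2 - A*((5*γ+ρ)*s^3) := by
    rw [hA2, ← hs2]; ring
  have hstep : A^2*s^2 - A*((5*γ+ρ)*s^3) ≤ w^2 := by rw [← hident]; exact hstep1
  have hD3 : 0 ≤ (5*γ+ρ)*s^3 := by positivity
  have hD4 : (5*γ+ρ)^2*s^4 ≤ A*((5*γ+ρ)*s^3) := by
    have := mul_le_mul_of_nonneg_right hC1s hD3
    nlinarith [this]
  have hsq : (A*s - (5*γ+ρ)*s^2)^2 ≤ w^2 := by linarith only [hstep, hD4]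
  have hwlow : A*s - (5*γ+ρ)*s^2 ≤ w := by
    rcases le_or_gt (A*s - (5*γ+ρ)*s^2) 0 with h | h
    · linarith only [hw0, h]
    · exact (pow_le_pow_iff_left₀ h.le hw0 two_ne_zero).1 hsq
  -- |c - (1 - w/2)| ≤ w^2/2
  have hww : w*w ≤ (3/4)*w := mul_le_mul_of_nonneg_right hw34 hw0
  have hmid1 : c ≤ 1 - w/2 := by
    have h7 : c^2 ≤ (1 - w/2)^2 := by rw [hcw]; linarith only [sq_nonneg w]
    exact (pow_le_pow_iff_left₀ hc0.le (by linarith only [hw34]) two_ne_zero).1 h7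
  have hmid2 : 1 - w/2 - w^2/2 ≤ c := by
    have hP : 0 ≤ w^2*(3/4 - w/2 - w^2/4) :=
      mul_nonneg (sq_nonneg w) (by linarith only [hww, hw34, hw0])
    have hu : (1 - w/2 - w^2/2)^2 ≤ c^2 := by rw [hcw]; linarith only [hP]
    have hupos : 0 < 1 - w/2 - w^2/2 := by linarith only [hww, hw34, hw0]
    exact (pow_le_pow_iff_left₀ hupos.le hc0.le two_ne_zero).1 hu
  rw [abs_le]
  have hDT : (5*γ+ρ)*s^2 = (5*γ+ρ)*T := by rw [hs2]
  have hDT0 : 0 ≤ (5*γ+ρ)*T := by positivity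
  constructor
  · linarith [hmid2, hwup, h2, hDT0]
  · linarith [hmid1, hwlow, hDT]

lemma quart_anti (γ ρ T b1 b2 : ℝ) (hγ : 0 < γ) (hρ : 0 < ρ) (hT : 0 ≤ T) (hρT : ρ * T ≤ 1/2)
    (h1 : 0 < b1) (h12 : b1 < b2) (h2 : b2 ≤ 1) :
    quart γ ρ T b2 < quart γ ρ T b1 := by
  have key : quart γ ρ T b1 - quart γ ρ T b2
      = (b2 - b1) * ((b1 + b2) * ((1 - ρ*T) * (2 - b1^2 - b2^2) + ρ*T)
          + γ*T*(b1^2 + b1*b2 + b2^2 + 1)) := by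
    unfold quart; ring
  have hb1lt : b1 < 1 := lt_of_lt_of_le h12 h2
  have hb1sq : b1^2 < 1 := by nlinarith
  have hb2sq : b2^2 ≤ 1 := by nlinarith
  have hρT0 : 0 ≤ ρ * T := mul_nonneg hρ.le hT
  have hpos : 0 < (1 - ρ*T) * (2 - b1^2 - b2^2) :=
    mul_pos (by linarith) (by linarith)
  have h3 : 0 < (b1 + b2) * ((1 - ρ*T) * (2 - b1^2 - b2^2) + ρ*T)
      + γ*T*(b1^2 + b1*b2 + b2^2 + 1) := by
    have h4 := mul_pos (by linarith : (0:ℝ) < b1 + b2)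
      (by linarith : 0 < (1 - ρ*T) * (2 - b1^2 - b2^2) + ρ*T)
    nlinarith [mul_nonneg (mul_nonneg hγ.le hT) (by nlinarith : (0:ℝ) ≤ b1^2 + b1*b2 + b2^2 + 1)]
  nlinarith [mul_pos (sub_pos.2 h12) h3]

lemma core_exists (γ ρ : ℝ) (hγ : 0 < γ) (hρ : 0 < ρ) (T : ℝ)
    (hT0 : 0 ≤ T) (hT1 : T ≤ 1) (hTγ : γ * T ≤ 1/2) (hTρ : ρ * T ≤ 1/2)
    (hTC : (5*γ+ρ)^2 * T ≤ 2*γ) :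
    ∃ b, b ∈ Set.Ioc (0:ℝ) 1 ∧ quart γ ρ T b = 0 ∧
      |b - (1 - Real.sqrt (γ/2) * Real.sqrt T)| ≤ (γ + (5*γ+ρ)/2) * T := by
  rcases eq_or_lt_of_le hT0 with hT | hT
  · refine ⟨1, by norm_num, ?_, ?_⟩
    · unfold quart; rw [← hT]; ring
    · rw [← hT]; simp
  set s := Real.sqrt T with hs_def
  have hs : 0 < s := Real.sqrt_pos.2 hT
  have hs2 : s^2 = T := Real.sq_sqrt hT0
  set A := Real.sqrt (2*γ) with hA_def
  have hA : 0 < A := Real.sqrt_pos.2 (by linarith)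
  have hA2 : A^2 = 2*γ := Real.sq_sqrt (by linarith)
  -- IVT
  have hcont : ContinuousOn (fun b => quart γ ρ T b) (Set.Icc (1/2 : ℝ) 1) := by
    have : Continuous (fun b => quart γ ρ T b) := by unfold quart; fun_prop
    exact this.continuousOn
  have h1 : quart γ ρ T 1 = -(2*γ*T) := by unfold quart; ring
  have hγT : 0 ≤ γ * T := mul_nonneg hγ.le hT0
  have hρT : 0 ≤ ρ * T := mul_nonneg hρ.le hT0
  have hhalf : 0 ≤ quart γ ρ T (1/2) := by unfold quart; nlinarith
  have hmem : (0:ℝ) ∈ Set.Icc (quart γ ρ T 1) (quart γ ρ T (1/2)) :=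
    ⟨by rw [h1]; linarith, hhalf⟩
  obtain ⟨c, hcIcc, hfc0⟩ := intermediate_value_Icc' (by norm_num : (1/2:ℝ) ≤ 1) hcont hmem
  obtain ⟨hc12, hc1⟩ := hcIcc
  have hfc : quart γ ρ T c = 0 := hfc0
  have key : (1 - c^2)^2 = γ*T*(c*(c^2+1)) - ρ*T*(c^2*(1 - c^2)) := by
    unfold quart at hfc; linear_combination hfc
  have haA : Real.sqrt (γ/2) = A/2 := by
    rw [hA_def, show (2:ℝ)*γ = 2^2*(γ/2) by ring, Real.sqrt_mul (by norm_num), Real.sqrt_sq (by norm_num)]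
    ring
  have hbnd := alg_bound γ ρ T s A c (1 - c^2) hγ hρ hs hs2 hA hA2 hTγ hTC hc12 hc1 rfl key
  refine ⟨c, ⟨by linarith, hc1⟩, hfc, ?_⟩
  rw [haA]
  exact hbnd

lemma core (γ ρ : ℝ) (hγ : 0 < γ) (hρ : 0 < ρ) :
    ∃ ε > 0, ∃ C > 0, ∃ β : ℝ → ℝ, ∀ T : ℝ, 0 ≤ T → T < ε →
      (β T ∈ Set.Ioc (0:ℝ) 1 ∧ quart γ ρ T (β T) = 0) ∧
      (∀ b ∈ Set.Ioc (0:ℝ) 1, quart γ ρ T b = 0 → b = β T) ∧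
      |β T - (1 - Real.sqrt (γ/2) * Real.sqrt T)| ≤ C * T := by
  set ε := min (min 1 (1/(2*γ))) (min (1/(2*ρ)) (2*γ/(5*γ+ρ)^2)) with hε_def
  have hε : 0 < ε :=
    lt_min (lt_min one_pos (by positivity)) (lt_min (by positivity) (by positivity))
  have hcond : ∀ T : ℝ, 0 ≤ T → T < ε →
      T ≤ 1 ∧ γ*T ≤ 1/2 ∧ ρ*T ≤ 1/2 ∧ (5*γ+ρ)^2*T ≤ 2*γ := by
    intro T hT0 hTε
    have e1 : ε ≤ 1 := le_trans (min_le_left _ _) (min_le_left _ _)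
    have e2 : ε ≤ 1/(2*γ) := le_trans (min_le_left _ _) (min_le_right _ _)
    have e3 : ε ≤ 1/(2*ρ) := le_trans (min_le_right _ _) (min_le_left _ _)
    have e4 : ε ≤ 2*γ/(5*γ+ρ)^2 := le_trans (min_le_right _ _) (min_le_right _ _)
    have hT1 : T ≤ 1 := by linarith
    have hTγ : γ*T ≤ 1/2 := by
      have : T ≤ 1/(2*γ) := by linarith
      calc γ*T ≤ γ*(1/(2*γ)) := mul_le_mul_of_nonneg_left this hγ.le
        _ = 1/2 := by field_simp
    have hTρ : ρ*T ≤ 1/2 := by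
      have : T ≤ 1/(2*ρ) := by linarith
      calc ρ*T ≤ ρ*(1/(2*ρ)) := mul_le_mul_of_nonneg_left this hρ.le
        _ = 1/2 := by field_simp
    have hTC : (5*γ+ρ)^2*T ≤ 2*γ := by
      have h5 : (0:ℝ) < (5*γ+ρ)^2 := by positivity
      have : T ≤ 2*γ/(5*γ+ρ)^2 := by linarith
      calc (5*γ+ρ)^2*T ≤ (5*γ+ρ)^2*(2*γ/(5*γ+ρ)^2) := mul_le_mul_of_nonneg_left this h5.le
        _ = 2*γ := by field_simp
    exact ⟨hT1, hTγ, hTρ, hTC⟩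
  have hex : ∀ T : ℝ, 0 ≤ T → T < ε → ∃ b, b ∈ Set.Ioc (0:ℝ) 1 ∧ quart γ ρ T b = 0 ∧
      |b - (1 - Real.sqrt (γ/2) * Real.sqrt T)| ≤ (γ + (5*γ+ρ)/2) * T := by
    intro T hT0 hTε
    obtain ⟨h1, h2, h3, h4⟩ := hcond T hT0 hTε
    exact core_exists γ ρ hγ hρ T hT0 h1 h2 h3 h4
  refine ⟨ε, hε, γ + (5*γ+ρ)/2, by positivity,
    fun T => if h : 0 ≤ T ∧ T < ε then (hex T h.1 h.2).choose else 1, ?_⟩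
  intro T hT0 hTε
  have hβ : (if h : 0 ≤ T ∧ T < ε then (hex T h.1 h.2).choose else 1)
      = (hex T hT0 hTε).choose := dif_pos ⟨hT0, hTε⟩
  simp only [hβ]
  obtain ⟨hmem, hroot, hbound⟩ := (hex T hT0 hTε).choose_spec
  have hρT : ρ * T ≤ 1/2 := (hcond T hT0 hTε).2.2.1
  refine ⟨⟨hmem, hroot⟩, ?_, hbound⟩
  intro b hb hq
  rcases lt_trichotomy b ((hex T hT0 hTε).choose) with h | h | h
  · have := quart_anti γ ρ T b _ hγ hρ hT0 hρT hb.1 h hmem.2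
    rw [hq, hroot] at this; exact absurd this (lt_irrefl 0)
  · exact h
  · have := quart_anti γ ρ T _ b hγ hρ hT0 hρT hmem.1 h hb.2
    rw [hq, hroot] at this; exact absurd this (lt_irrefl 0)

/-- existence of a branch `β(Δt)` of unique solutions to the monopoly
quartic in `(0, σ_K/σ_S]`, with first-order asymptotics
`β(Δt) = σ_K/σ_S − (γσ_K³/(2σ_S³))^{1/2} √Δt + O(Δt)`. -/
theorem stmt1 (σS σK γ ρ : ℝ) (hσS : 0 < σS) (hσK : 0 < σK) (hγ : 0 < γ) (hρ : 0 < ρ) :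
    ∃ ε > 0, ∃ C > 0, ∃ β : ℝ → ℝ, ∀ Δt : ℝ, 0 ≤ Δt → Δt < ε →
      (β Δt ∈ Set.Ioc 0 (σK / σS) ∧
        0 = (1 - ρ * Δt) * (β Δt) ^ 4
              - (2 - ρ * Δt + β Δt * γ * Δt) * (σK / σS) ^ 2 * (β Δt) ^ 2
              + (σK / σS) ^ 4 * (1 - β Δt * γ * Δt)) ∧
      (∀ b : ℝ, b ∈ Set.Ioc 0 (σK / σS) →
        0 = (1 - ρ * Δt) * b ^ 4
              - (2 - ρ * Δt + b * γ * Δt) * (σK / σS) ^ 2 * b ^ 2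
              + (σK / σS) ^ 4 * (1 - b * γ * Δt) → b = β Δt) ∧
      |β Δt - (σK / σS - Real.sqrt (γ * σK ^ 3 / (2 * σS ^ 3)) * Real.sqrt Δt)| ≤ C * Δt := by
  have hσ : 0 < σK / σS := div_pos hσK hσS
  set k := σK / σS with hk_def
  have hk0 : k ≠ 0 := ne_of_gt hσ
  obtain ⟨ε, hε, C, hC, β, h⟩ := core (k*γ) ρ (by positivity) hρ
  refine ⟨ε, hε, k*C, by positivity, fun T => k * β T, ?_⟩
  intro Δt h0 h1
  simp only []
  obtain ⟨⟨hmem, hroot⟩, huniq, hbound⟩ := h Δt h0 h1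
  unfold quart at hroot
  constructor
  · constructor
    · refine ⟨mul_pos hσ hmem.1, ?_⟩
      calc k * β Δt ≤ k * 1 := mul_le_mul_of_nonneg_left hmem.2 hσ.le
        _ = k := mul_one k
    · linear_combination (-(k^4)) * hroot
  constructor
  · intro b hb heq
    have hbk : b / k ∈ Set.Ioc (0:ℝ) 1 := ⟨div_pos hb.1 hσ, (div_le_one hσ).2 hb.2⟩
    have hbb : k * (b/k) = b := by field_simp
    rw [← hbb] at heq
    have hq4 : k^4 * quart (k*γ) ρ Δt (b/k) = 0 := by
      unfold quart; linear_combination (-1 : ℝ) * heq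
    have hq : quart (k*γ) ρ Δt (b/k) = 0 :=
      (mul_eq_zero.1 hq4).resolve_left (pow_ne_zero 4 hk0)
    have hbe := huniq (b/k) hbk hq
    have := (div_eq_iff hk0).1 hbe
    rw [this]; ring
  · have hsqrt : Real.sqrt (γ * σK ^ 3 / (2 * σS ^ 3)) = k * Real.sqrt (k*γ/2) := by
      rw [show γ * σK ^ 3 / (2 * σS ^ 3) = k^2 * (k*γ/2) by rw [hk_def]; field_simp,
        Real.sqrt_mul (by positivity), Real.sqrt_sq hσ.le]
    rw [hsqrt, show k * β Δt - (k - k * Real.sqrt (k*γ/2) * Real.sqrt Δt)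
        = k * (β Δt - (1 - Real.sqrt (k*γ/2) * Real.sqrt Δt)) by ring,
      abs_mul, abs_of_pos hσ, show k*C*Δt = k*(C*Δt) by ring]
    exact mul_le_mul_of_nonneg_left hbound hσ.le
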